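/- Let x be a real number with |x| < 1. Then ∫_0^{2π} ∫_0^1 r (1 + r x cos θ)^{−3} dr dθ = π (1 − x^2)^{−3/2}. -/

import Mathlib

open Real

lemma inner_int (a : ℝ) (ha : |a| < 1) :
    ∫ r in (0:ℝ)..1, r / (1 + r * a) ^ 3 = 1 / (2 * (1 + a) ^ 2) := by
  have key : ∀ r ∈ Set.uIcc (0:ℝ) 1, 0 < 1 + r * a := by
    intro r hr
    rw [Set.uIcc_of_le (by norm_num)] at hr
    have h1 : |r * a| ≤ |a| := by
      rw [abs_mul]
      calc |r| * |a| ≤ 1 * |a| := by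
            apply mul_le_mul_of_nonneg_right _ (abs_nonneg a)
            rw [abs_le]; constructor <;> linarith [hr.1, hr.2]
        _ = |a| := one_mul _
    nlinarith [abs_lt.mp (lt_of_le_of_lt h1 ha)]
  have hderiv : ∀ r ∈ Set.uIcc (0:ℝ) 1,
      HasDerivAt (fun r => r ^ 2 / (2 * (1 + r * a) ^ 2)) (r / (1 + r * a) ^ 3) r := by
    intro r hr
    have hpos := key r hr
    have h1 : HasDerivAt (fun r : ℝ => r ^ 2) (2 * r) r := by
      simpa using (hasDerivAt_pow 2 r)
    have h2 : HasDerivAt (fun r : ℝ => 1 + r * a) a r := by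
      simpa using ((hasDerivAt_id r).mul_const a).const_add 1
    have h3 : HasDerivAt (fun r : ℝ => 2 * (1 + r * a) ^ 2) (2 * (2 * (1 + r * a) * a)) r := by
      simpa [mul_comm, mul_assoc] using ((h2.pow 2).const_mul 2)
    have h4 := h1.div h3 (by positivity)
    refine h4.congr_deriv (Eq.symm ?_)
    field_simp
    ring
  have hint : IntervalIntegrable (fun r => r / (1 + r * a) ^ 3) MeasureTheory.volume 0 1 := by
    apply ContinuousOn.intervalIntegrable
    apply ContinuousOn.div (continuousOn_id' _) (by fun_prop)
    intro r hr
    exact pow_ne_zero _ (key r hr).ne'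
  have := intervalIntegral.integral_eq_sub_of_hasDerivAt hderiv hint
  rw [this]
  norm_num

lemma outer_int (x : ℝ) (hx : |x| < 1) :
    ∫ θ in (0:ℝ)..(2 * π), 1 / (2 * (1 + x * Real.cos θ) ^ 2)
      = π / (1 - x ^ 2) ^ ((3 : ℝ) / 2) := by
  obtain ⟨hx1, hx2⟩ := abs_lt.mp hx
  have h1x : 0 < 1 - x ^ 2 := by nlinarith
  set c : ℝ := Real.sqrt (1 - x ^ 2) with hc_def
  have hc : 0 < c := Real.sqrt_pos.mpr h1x
  have hc2 : c ^ 2 = 1 - x ^ 2 := Real.sq_sqrt h1x.le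
  have hxabs : ∀ θ : ℝ, |x * Real.cos θ| < 1 := by
    intro θ
    rw [abs_mul]
    calc |x| * |Real.cos θ| ≤ |x| * 1 :=
          mul_le_mul_of_nonneg_left (Real.abs_cos_le_one θ) (abs_nonneg x)
      _ = |x| := mul_one _
      _ < 1 := hx
  have hD : ∀ θ : ℝ, 0 < 1 + x * Real.cos θ := by
    intro θ; nlinarith [abs_lt.mp (hxabs θ)]
  have hD2 : ∀ θ : ℝ, 0 < 1 + c + x * Real.cos θ := by
    intro θ; nlinarith [abs_lt.mp (hxabs θ)]
  set F : ℝ → ℝ := fun θ =>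
    (-(x * Real.sin θ) / (1 + x * Real.cos θ) +
      (θ - 2 * Real.arctan (x * Real.sin θ / (1 + c + x * Real.cos θ))) / c) / (2 * c ^ 2)
    with hF_def
  have hderiv : ∀ θ ∈ Set.uIcc (0:ℝ) (2 * π),
      HasDerivAt F (1 / (2 * (1 + x * Real.cos θ) ^ 2)) θ := by
    intro θ _
    have hs : Real.sin θ ^ 2 = 1 - Real.cos θ ^ 2 := Real.sin_sq θ
    have hDθ := hD θ
    have hD2θ := hD2 θ
    have hN : HasDerivAt (fun θ => x * Real.sin θ) (x * Real.cos θ) θ :=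
      (Real.hasDerivAt_sin θ).const_mul x
    have hC : HasDerivAt (fun θ => 1 + x * Real.cos θ) (x * -Real.sin θ) θ :=
      ((Real.hasDerivAt_cos θ).const_mul x).const_add 1
    have hC2 : HasDerivAt (fun θ => 1 + c + x * Real.cos θ) (x * -Real.sin θ) θ := by
      simpa [add_assoc] using ((Real.hasDerivAt_cos θ).const_mul x).const_add (1 + c)
    -- derivative of u = x sin θ / (1 + c + x cos θ)
    have hu : HasDerivAt (fun θ => x * Real.sin θ / (1 + c + x * Real.cos θ))
        ((x * Real.cos θ * (1 + c) + x ^ 2) / (1 + c + x * Real.cos θ) ^ 2) θ := by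
      have h := hN.div hC2 hD2θ.ne'
      refine h.congr_deriv (Eq.symm ?_)
      congr 1
      linear_combination (-(x ^ 2)) * hs
    -- derivative of arctan(u)
    have hA : HasDerivAt (fun θ => Real.arctan (x * Real.sin θ / (1 + c + x * Real.cos θ)))
        ((x * Real.cos θ + 1 - c) / (2 * (1 + x * Real.cos θ))) θ := by
      have h := (Real.hasDerivAt_arctan (x * Real.sin θ / (1 + c + x * Real.cos θ))).comp θ hu
      refine h.congr_deriv (Eq.symm ?_)
      have hden : 1 + (x * Real.sin θ / (1 + c + x * Real.cos θ)) ^ 2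
          = 2 * (1 + c) * (1 + x * Real.cos θ) / (1 + c + x * Real.cos θ) ^ 2 := by
        field_simp
        linear_combination (x ^ 2) * hs + hc2
      rw [hden, one_div_div, div_mul_div_comm,
        div_eq_div_iff (by positivity) (by positivity)]
      linear_combination (-2 * (1 + x * Real.cos θ) * (1 + c + x * Real.cos θ) ^ 2) * hc2
    have hr := (hN.neg).div hC hDθ.ne'
    have hphi := ((hasDerivAt_id θ).sub (hA.const_mul 2)).div_const c
    have htot := (hr.add hphi).div_const (2 * c ^ 2)
    have e1 : (-(x * Real.cos θ) * (1 + x * Real.cos θ) - -(x * Real.sin θ) * (x * -Real.sin θ))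
          / (1 + x * Real.cos θ) ^ 2
        = (-(x * Real.cos θ) - x ^ 2) / (1 + x * Real.cos θ) ^ 2 := by
      congr 1
      linear_combination (-(x ^ 2)) * hs
    have e2 : (1 - 2 * ((x * Real.cos θ + 1 - c) / (2 * (1 + x * Real.cos θ)))) / c
        = 1 / (1 + x * Real.cos θ) := by
      field_simp
      ring
    refine htot.congr_deriv (Eq.symm ?_)
    simp only [Pi.neg_apply]
    rw [e1, e2, hc2]
    field_simp
    ring
  have hint : IntervalIntegrable (fun θ => 1 / (2 * (1 + x * Real.cos θ) ^ 2))
      MeasureTheory.volume 0 (2 * π) := by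
    apply Continuous.intervalIntegrable
    apply Continuous.div continuous_const (by continuity)
    intro θ
    have := hD θ
    positivity
  rw [intervalIntegral.integral_eq_sub_of_hasDerivAt hderiv hint]
  have hc3 : (1 - x ^ 2) ^ ((3 : ℝ) / 2) = c ^ 3 := by
    rw [show ((3:ℝ)/2) = (1/2) * 3 by norm_num, Real.rpow_mul h1x.le,
      ← Real.sqrt_eq_rpow, show (3:ℝ) = ((3:ℕ):ℝ) by norm_num, Real.rpow_natCast]
  rw [hF_def, hc3]
  simp only [Real.sin_two_pi, Real.cos_two_pi, Real.sin_zero, Real.cos_zero,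
    mul_zero, mul_one, zero_div, neg_zero, zero_add, Real.arctan_zero, sub_zero, zero_sub]
  field_simp

theorem stmt_10 (x : ℝ) (hx : |x| < 1) :
    ∫ θ in (0 : ℝ)..(2 * Real.pi), ∫ r in (0 : ℝ)..1,
        r / (1 + r * x * Real.cos θ) ^ 3 =
      Real.pi / (1 - x ^ 2) ^ ((3 : ℝ) / 2) := by
  have h : ∀ θ : ℝ, (∫ r in (0:ℝ)..1, r / (1 + r * x * Real.cos θ) ^ 3)
      = 1 / (2 * (1 + x * Real.cos θ) ^ 2) := by
    intro θ
    have ha : |x * Real.cos θ| < 1 := by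
      rw [abs_mul]
      calc |x| * |Real.cos θ| ≤ |x| * 1 :=
            mul_le_mul_of_nonneg_left (Real.abs_cos_le_one θ) (abs_nonneg x)
        _ = |x| := mul_one _
        _ < 1 := hx
    have := inner_int (x * Real.cos θ) ha
    simpa [mul_assoc] using this
  rw [intervalIntegral.integral_congr (fun θ _ => h θ)]
  exact outer_int x hx
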